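/- Let S be a Dirac bundle over a compact riemannian n-manifold and let μ be an eigenvalue of the Dirac operator D. Then μ² ≥ (n/(n−1)) R₀, where R₀ = min over unit-length σ ∈ S of ⟨Rσ,σ⟩, R the Weitzenböck operator. -/

import Mathlib

open scoped InnerProductSpace

/-- Let `S` be a Dirac bundle over a compact riemannian `n`-manifold and
let `μ` be an eigenvalue of the Dirac operator `D`.  Then `μ² ≥ (n/(n−1)) R₀`, where
`R₀ = min_{|σ|=1} ⟨Rw σ, σ⟩` is the minimum of the (pointwise self-adjoint) Weitzenböck
operator over unit vectors: equivalently, `R₀ ⟨σ,σ⟩ₚ ≤ ⟨Rw σ, σ⟩ₚ` at every point `p`.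
Here `Γ` is the space of smooth sections with `L²` inner product, `ip` the pointwise inner
product, and the hypotheses are the context facts: the modified-connection identity
`(D−μ)²σ = ∇^{μ*}∇^μ σ + Rw σ + (1−n)μ²σ` and the nonnegativity
`(∇^{μ*}∇^μ σ, σ) = ‖∇^μ σ‖² ≥ 0`, both valid on the compact manifold `M`. -/
theorem dirac_eigenvalue_lower_bound
    {M Γ VF : Type*} [NormedAddCommGroup Γ] [InnerProductSpace ℝ Γ]
    (n : ℕ) (hn : 2 ≤ n)
    (nabla cl : VF → Γ →ₗ[ℝ] Γ)
    (D Rw : Γ →ₗ[ℝ] Γ)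
    (ip : Γ → Γ → M → ℝ)
    (hip_sub : ∀ (σ τ ρ : Γ) (p : M), ip (σ - τ) ρ p = ip σ ρ p - ip τ ρ p)
    (hip_smul : ∀ (r : ℝ) (σ τ : Γ) (p : M), ip (r • σ) τ p = r * ip σ τ p)
    (hint : ∀ σ τ : Γ, (∀ p, 0 ≤ ip σ τ p) → 0 ≤ ⟪σ, τ⟫_ℝ)
    (lapF : ℝ → Γ →ₗ[ℝ] Γ)
    (hlapF : ∀ (f : ℝ) (σ : Γ),
      D (D σ) - (2 * f) • D σ + (f ^ 2) • σ
        = lapF f σ + Rw σ + ((1 - (n : ℝ)) * f ^ 2) • σ)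
    (hlapF_nonneg : ∀ (f : ℝ) (σ : Γ), 0 ≤ ⟪lapF f σ, σ⟫_ℝ)
    (R0 : ℝ)
    (hR0 : ∀ (σ : Γ) (p : M), R0 * ip σ σ p ≤ ip (Rw σ) σ p)
    (μ : ℝ) (σ : Γ) (hσ : σ ≠ 0) (heig : D σ = μ • σ) :
    ((n : ℝ) / ((n : ℝ) - 1)) * R0 ≤ μ ^ 2 := by

  have hn' : (2:ℝ) ≤ (n:ℝ) := by exact_mod_cast hn
  have hn0 : (0:ℝ) < (n:ℝ) := by linarith
  have hn1 : (0:ℝ) < (n:ℝ) - 1 := by linarith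
  set f : ℝ := μ / n with hf
  have hs : (0:ℝ) < ⟪σ, σ⟫_ℝ := by rw [real_inner_self_eq_norm_sq]; exact pow_pos (norm_pos_iff.mpr hσ) 2
  set s : ℝ := ⟪σ, σ⟫_ℝ
  have hRw : R0 * s ≤ ⟪Rw σ, σ⟫_ℝ := by
    have h1 := hint (Rw σ - R0 • σ) σ (fun p => by
      have h := hR0 σ p
      rw [hip_sub, hip_smul]; linarith)
    have h2 : ⟪Rw σ - R0 • σ, σ⟫_ℝ = ⟪Rw σ, σ⟫_ℝ - R0 * s := by
      rw [inner_sub_left, real_inner_smul_left]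
    linarith [h1, h2.symm.le, h2.le]
  have hD2 : D (D σ) = (μ^2) • σ := by
    rw [heig, map_smul, heig, smul_smul]; ring_nf
  have hkey := congrArg (fun x => ⟪x, σ⟫_ℝ) (hlapF f σ)
  simp only [heig, map_smul, smul_smul, inner_sub_left, inner_add_left, real_inner_smul_left] at hkey
  have hL := hlapF_nonneg f σ
  have hineq : R0 * s ≤ ((μ^2 - 2*f*μ + f^2 - (1-(n:ℝ))*f^2)) * s := by nlinarith [hkey, hL, hRw]
  have hfield : μ^2 - 2*f*μ + f^2 - (1-(n:ℝ))*f^2 = (((n:ℝ)-1)/n) * μ^2 := by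
    rw [hf]; field_simp; ring
  rw [hfield] at hineq
  have hR0le : R0 ≤ (((n:ℝ)-1)/n) * μ^2 := le_of_mul_le_mul_right hineq hs
  rw [div_mul_eq_mul_div, div_le_iff₀ hn1]
  have := mul_le_mul_of_nonneg_left hR0le hn0.le
  calc (n:ℝ) * R0 ≤ (n:ℝ) * ((((n:ℝ)-1)/n) * μ^2) := this
    _ = μ^2 * ((n:ℝ)-1) := by field_simp
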